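/- Let X = {(2^m, 2^k) : m, k ∈ ℤ, m ≥ 0, k ≥ 0} ⊆ ℕ² and E = {(a,b) ∈ ℕ² : b ≤ log₂ a} ∪ {(a,b) ∈ ℕ² : a ≤ log₂ b}. For every D ∈ ℕ there exist x₀, y₀ ∈ ℕ such that the square S_D = {(s₁,s₂) ∈ ℕ² : x₀ ≤ s₁ ≤ x₀ + D, y₀ ≤ s₂ ≤ y₀ + D} satisfies S_D ⊆ E and FS(X) ∩ S_D = ∅. -/

import Mathlib

open scoped BigOperators

/-- `FS X` is the set of all sums of finitely many distinct elements of `X`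
(sums over finite nonempty subsets of `X`). -/
def FS {α : Type*} [AddCommMonoid α] (X : Set α) : Set α :=
  {s | ∃ F : Finset α, F.Nonempty ∧ ↑F ⊆ X ∧ s = ∑ x ∈ F, x}

/-- `X = {(2^m, 2^k) : m, k ≥ 0}`. -/
def X2 : Set (ℕ × ℕ) := {p | ∃ m k : ℕ, p = (2 ^ m, 2 ^ k)}

/-- The exceptional set `E = {(a,b) : b ≤ log₂ a} ∪ {(a,b) : a ≤ log₂ b}` (in ℕ²). -/
def E2 : Set (ℕ × ℕ) := {p | (1 ≤ p.1 ∧ 1 ≤ p.2) ∧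
  ((p.2 : ℝ) ≤ Real.logb 2 p.1 ∨ (p.1 : ℝ) ≤ Real.logb 2 p.2)}

/-- Binary digit sum. -/
def sdig (n : ℕ) : ℕ := (Nat.digits 2 n).sum

lemma sdig_zero : sdig 0 = 0 := by simp [sdig]

lemma sdig_def (n : ℕ) (h : n ≠ 0) : sdig n = n % 2 + sdig (n / 2) := by
  unfold sdig
  rw [Nat.digits_def' (by norm_num : 1 < 2) (Nat.pos_of_ne_zero h)]
  simp

lemma sdig_succ (n : ℕ) : sdig (n + 1) ≤ sdig n + 1 := by
  induction n using Nat.strong_induction_on with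
  | _ n ih =>
    rcases Nat.eq_zero_or_pos n with rfl | hn
    · simp [sdig]
    rcases Nat.mod_two_eq_zero_or_one n with h2 | h2
    · have hq : (n + 1) / 2 = n / 2 := by omega
      rw [sdig_def (n + 1) (by omega), sdig_def n (by omega), hq]
      omega
    · have hq : (n + 1) / 2 = n / 2 + 1 := by omega
      rw [sdig_def (n + 1) (by omega), sdig_def n (by omega), hq]
      have h4 := ih (n / 2) (by omega)
      omega

lemma sdig_add_aux : ∀ n, ∀ a b : ℕ, a + b ≤ n → sdig (a + b) ≤ sdig a + sdig b := by
  intro n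
  induction n with
  | zero =>
    intro a b h
    have : a = 0 ∧ b = 0 := by omega
    simp [this.1, this.2, sdig]
  | succ n ih =>
    intro a b h
    rcases Nat.eq_zero_or_pos a with rfl | ha
    · simp
    rcases Nat.eq_zero_or_pos b with rfl | hb
    · simp
    rcases Nat.mod_two_eq_zero_or_one a with h2 | h2 <;>
      rcases Nat.mod_two_eq_zero_or_one b with h3 | h3
    · have hq : (a + b) / 2 = a / 2 + b / 2 := by omega
      rw [sdig_def a (by omega), sdig_def b (by omega), sdig_def (a + b) (by omega), hq]
      have := ih (a / 2) (b / 2) (by omega)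
      omega
    · have hq : (a + b) / 2 = a / 2 + b / 2 := by omega
      rw [sdig_def a (by omega), sdig_def b (by omega), sdig_def (a + b) (by omega), hq]
      have := ih (a / 2) (b / 2) (by omega)
      omega
    · have hq : (a + b) / 2 = a / 2 + b / 2 := by omega
      rw [sdig_def a (by omega), sdig_def b (by omega), sdig_def (a + b) (by omega), hq]
      have := ih (a / 2) (b / 2) (by omega)
      omega
    · have hq : (a + b) / 2 = a / 2 + b / 2 + 1 := by omega
      rw [sdig_def a (by omega), sdig_def b (by omega), sdig_def (a + b) (by omega), hq]
      have h4 := ih (a / 2) (b / 2) (by omega)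
      have h5 := sdig_succ (a / 2 + b / 2)
      omega

lemma sdig_add (a b : ℕ) : sdig (a + b) ≤ sdig a + sdig b :=
  sdig_add_aux (a + b) a b le_rfl

lemma sdig_div_two (n : ℕ) : sdig (n / 2) ≤ sdig n := by
  rcases Nat.eq_zero_or_pos n with rfl | hn
  · simp
  · rw [sdig_def n (by omega)]; omega

lemma sdig_div_pow (n c : ℕ) : sdig (n / 2 ^ c) ≤ sdig n := by
  induction c with
  | zero => simp
  | succ c ih =>
    have : n / 2 ^ (c + 1) = n / 2 ^ c / 2 := by
      rw [Nat.div_div_eq_div_mul, pow_succ]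
    rw [this]
    exact le_trans (sdig_div_two _) ih

lemma sdig_two_pow (k : ℕ) : sdig (2 ^ k) = 1 := by
  induction k with
  | zero => simp [sdig]
  | succ k ih =>
    rw [sdig_def (2 ^ (k + 1)) (by positivity)]
    have h1 : 2 ^ (k + 1) = 2 * 2 ^ k := by ring
    have h2 : 2 ^ (k + 1) % 2 = 0 := by omega
    have h3 : 2 ^ (k + 1) / 2 = 2 ^ k := by omega
    rw [h2, h3, ih]

lemma sdig_pred_two_pow (k : ℕ) : sdig (2 ^ k - 1) = k := by
  induction k with
  | zero => simp [sdig]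
  | succ k ih =>
    have hk : 0 < (2:ℕ) ^ k := by positivity
    have h1 : 2 ^ (k + 1) = 2 * 2 ^ k := by ring
    rw [sdig_def (2 ^ (k + 1) - 1) (by omega)]
    have h2 : (2 ^ (k + 1) - 1) % 2 = 1 := by omega
    have h3 : (2 ^ (k + 1) - 1) / 2 = 2 ^ k - 1 := by omega
    rw [h2, h3, ih]
    omega

lemma sdig_sum {α : Type*} (F : Finset α) (f : α → ℕ) :
    sdig (∑ x ∈ F, f x) ≤ ∑ x ∈ F, sdig (f x) := by
  classical
  induction F using Finset.induction with
  | empty => simp [sdig]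
  | insert x s hx ih =>
    rw [Finset.sum_insert hx, Finset.sum_insert hx]
    exact le_trans (sdig_add _ _) (by omega)

/-- `E` contains arbitrarily large squares entirely avoiding `FS(X)`. -/
theorem stmt_6 (D : ℕ) (hD : 1 ≤ D) :
    ∃ x₀ y₀ : ℕ, 1 ≤ x₀ ∧ 1 ≤ y₀ ∧
      {p : ℕ × ℕ | x₀ ≤ p.1 ∧ p.1 ≤ x₀ + D ∧ y₀ ≤ p.2 ∧ p.2 ≤ y₀ + D} ⊆ E2 ∧
      FS X2 ∩ {p : ℕ × ℕ | x₀ ≤ p.1 ∧ p.1 ≤ x₀ + D ∧ y₀ ≤ p.2 ∧ p.2 ≤ y₀ + D} = ∅ := by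
  have hD2 : D < 2 ^ D := Nat.lt_two_pow_self
  have hMD : 2 ^ (2 * D + 2) = 2 ^ (D + 2) * 2 ^ D := by
    rw [← pow_add]; ring_nf
  have hD1pos : (0:ℕ) < 2 ^ (D + 1) := by positivity
  have hD2pos : (0:ℕ) < 2 ^ (D + 2) := by positivity
  have hDpow : 2 ^ (D + 2) = 2 * 2 ^ (D + 1) := by ring
  have hle : 2 ^ (D + 2) ≤ 2 ^ (2 * D + 2) := Nat.pow_le_pow_right (by norm_num) (by omega)
  have hD1lt : D + 1 < 2 ^ (D + 1) := Nat.lt_two_pow_self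
  -- big enough: 2^(2D+2) - 1 - D ≥ 2^(D+1)
  have hbig : 2 ^ (D + 1) ≤ 2 ^ (2 * D + 2) - 1 - D := by omega
  refine ⟨2 ^ (2 * D + 2) - 1 - D, 1, by omega, le_rfl, ?_, ?_⟩
  · -- square inside E2
    intro p hp
    obtain ⟨h1, h2, h3, h4⟩ := hp
    refine ⟨⟨by omega, h3⟩, Or.inl ?_⟩
    have hp1 : (2:ℝ) ^ (D + 1) ≤ (p.1 : ℝ) := by
      exact_mod_cast le_trans hbig h1
    calc (p.2 : ℝ) ≤ ((D : ℝ) + 1) := by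
          have : (p.2 : ℝ) ≤ ((1 + D : ℕ) : ℝ) := by exact_mod_cast h4
          push_cast at this; linarith
      _ = Real.logb 2 (2 ^ (D + 1)) := by
          rw [Real.logb_pow, Real.logb_self_eq_one (by norm_num : (1:ℝ) < 2)]
          push_cast; ring
      _ ≤ Real.logb 2 p.1 := Real.logb_le_logb_of_le (by norm_num) (by positivity) hp1
  · -- disjoint from FS X2
    rw [Set.eq_empty_iff_forall_notMem]
    rintro p ⟨⟨F, hne, hsub, hsum⟩, h1, h2, h3, h4⟩
    have hp1 : p.1 = ∑ x ∈ F, x.1 := by rw [hsum, Prod.fst_sum]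
    have hp2 : p.2 = ∑ x ∈ F, x.2 := by rw [hsum, Prod.snd_sum]
    -- card bound via second coordinate
    have hcard : F.card ≤ D + 1 := by
      have : F.card ≤ ∑ x ∈ F, x.2 := by
        rw [Finset.card_eq_sum_ones]
        refine Finset.sum_le_sum fun x hx => ?_
        obtain ⟨m, k, hxe⟩ := hsub hx
        rw [hxe]; exact Nat.one_le_pow _ _ (by norm_num)
      omega
    -- digit sum upper bound
    have hup : sdig p.1 ≤ D + 1 := by
      calc sdig p.1 ≤ ∑ x ∈ F, sdig x.1 := by rw [hp1]; exact sdig_sum F _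
        _ = F.card := by
            rw [Finset.card_eq_sum_ones]
            refine Finset.sum_congr rfl fun x hx => ?_
            obtain ⟨m, k, hxe⟩ := hsub hx
            rw [hxe]; exact sdig_two_pow m
        _ ≤ D + 1 := hcard
    -- digit sum lower bound
    have hrep : p.1 = (2 ^ D - 1 - (2 ^ (2 * D + 2) - 1 - p.1)) + (2 ^ (D + 2) - 1) * 2 ^ D := by
      have hj : 2 ^ (2 * D + 2) - 1 - p.1 ≤ D := by omega
      have hmul : (2 ^ (D + 2) - 1) * 2 ^ D = 2 ^ (2 * D + 2) - 2 ^ D := by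
        rw [Nat.sub_mul, one_mul, hMD]
      omega
    have hDpos : (0:ℕ) < 2 ^ D := by positivity
    have hdiv : p.1 / 2 ^ D = 2 ^ (D + 2) - 1 := by
      rw [hrep, Nat.add_mul_div_right _ _ hDpos, Nat.div_eq_of_lt (by omega)]
      omega
    have hlow : D + 2 ≤ sdig p.1 := by
      have := sdig_div_pow p.1 D
      rw [hdiv, sdig_pred_two_pow] at this
      omega
    omega
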